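/- If c and c' are two injective weight functions on the ground set of a matroid inducing the same strict linear order, then the minimum weight basis is the same for c and c' (and it is unique). -/

import Mathlib

open Set

private lemma wsum_insert_diff {α : Type*} [Fintype α] (c : α → ℝ) {D : Set α} {e f : α}
    (he : e ∉ D) (hf : f ∈ D) :
    (∑ᶠ x ∈ insert e (D \ {f}), c x) = (∑ᶠ x ∈ D, c x) + c e - c f := by
  classical
  have h1 : ∀ S : Set α, (∑ᶠ x ∈ S, c x) = ∑ x ∈ S.toFinite.toFinset, c x := by
    intro S
    rw [← finsum_mem_coe_finset, Set.Finite.coe_toFinset]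
  rw [h1, h1]
  have h2 : (insert e (D \ {f})).toFinite.toFinset
      = insert e ((D.toFinite.toFinset).erase f) := by
    ext x
    simp only [Set.Finite.mem_toFinset, Set.mem_insert_iff, Set.mem_diff, Set.mem_singleton_iff,
      Finset.mem_insert, Finset.mem_erase]
    tauto
  rw [h2, Finset.sum_insert (by simp only [Finset.mem_insert, Finset.mem_erase, Set.Finite.mem_toFinset]; exact fun h => he h.2),
    Finset.sum_erase_eq_sub (by simpa [Set.Finite.mem_toFinset] using hf)]
  ring

private lemma base_exchange_into {α : Type*} (M : Matroid α) {B D : Set α}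
    (hB : M.IsBase B) (hD : M.IsBase D) {e : α} (he : e ∈ B \ D) :
    ∃ f ∈ D \ B, M.IsBase (insert e (D \ {f})) := by
  have hI0 : M.Indep (insert e (B ∩ D)) :=
    hB.indep.subset (insert_subset he.1 inter_subset_left)
  have hsub : insert e (B ∩ D) ⊆ insert e D := insert_subset_insert inter_subset_right
  have hEsub : insert e D ⊆ M.E :=
    insert_subset (hB.subset_ground he.1) hD.subset_ground
  obtain ⟨I, hIbasis, hI0I⟩ := hI0.subset_isBasis_of_subset hsub hEsub
  have hIbase : M.IsBase I := hD.isBase_of_isBasis_superset (subset_insert e D) hIbasis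
  have heI : e ∈ I := hI0I (mem_insert _ _)
  have hIdiff : I \ D = {e} := by
    apply subset_antisymm
    · rintro x ⟨hxI, hxD⟩
      have := hIbasis.subset hxI
      rcases this with h | h
      · exact h
      · exact absurd h hxD
    · rintro x rfl
      exact ⟨heI, he.2⟩
  have hcard : (D \ I).encard = 1 := by
    rw [← hIbase.encard_diff_comm hD, hIdiff, Set.encard_singleton]
  obtain ⟨f, hf⟩ := Set.encard_eq_one.mp hcard
  have hfDI : f ∈ D \ I := hf ▸ rfl
  have hfB : f ∉ B := fun hfB => hfDI.2 (hI0I (Set.mem_insert_of_mem _ ⟨hfB, hfDI.1⟩))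
  have hIeq : I = insert e (D \ {f}) := by
    apply subset_antisymm
    · intro x hxI
      rcases hIbasis.subset hxI with h | h
      · exact h ▸ mem_insert _ _
      · refine Set.mem_insert_of_mem _ ⟨h, ?_⟩
        rintro rfl
        exact hfDI.2 hxI
    · rintro x (rfl | ⟨hxD, hxf⟩)
      · exact heI
      · by_contra hxI
        exact hxf (by have : x ∈ D \ I := ⟨hxD, hxI⟩; rwa [hf] at this)
  exact ⟨f, ⟨hfDI.1, hfB⟩, hIeq ▸ hIbase⟩

private lemma min_basis_eq {α : Type*} [Fintype α] (M : Matroid α)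
    (c c' : α → ℝ) (hc : Function.Injective c)
    (horder : ∀ e f : α, c e < c f ↔ c' e < c' f)
    {B D : Set α} (hB : M.IsBase B) (hD : M.IsBase D)
    (hBmin : ∀ B', M.IsBase B' → (∑ᶠ x ∈ B, c x) ≤ ∑ᶠ x ∈ B', c x)
    (hDmin : ∀ B', M.IsBase B' → (∑ᶠ x ∈ D, c' x) ≤ ∑ᶠ x ∈ B', c' x) : B = D := by
  by_contra hne
  set S : Set α := (B \ D) ∪ (D \ B) with hS
  have hSne : S.Nonempty := by
    rw [Set.nonempty_iff_ne_empty]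
    intro hemp
    apply hne
    rw [Set.union_empty_iff] at hemp
    exact Set.Subset.antisymm (fun x hx => by
        by_contra hxD; exact absurd (show x ∈ B \ D from ⟨hx, hxD⟩) (hemp.1 ▸ id))
      (fun x hx => by
        by_contra hxB; exact absurd (show x ∈ D \ B from ⟨hx, hxB⟩) (hemp.2 ▸ id))
  obtain ⟨e, heS, hemin⟩ := Set.exists_min_image S c S.toFinite hSne
  have hlt : ∀ f ∈ S, f ≠ e → c e < c f := fun f hf hfe =>
    lt_of_le_of_ne (hemin f hf) (fun h => hfe (hc h.symm))
  rcases heS with he | he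
  · -- e ∈ B \ D : improve D, contradicting minimality of D for c'
    obtain ⟨f, hfDB, hbase⟩ := base_exchange_into M hB hD he
    have hfe : f ≠ e := fun h => hfDB.2 (h ▸ he.1)
    have hceltf : c e < c f := hlt f (Or.inr hfDB) hfe
    have hc'lt : c' e < c' f := (horder e f).mp hceltf
    have := hDmin _ hbase
    rw [wsum_insert_diff c' he.2 hfDB.1] at this
    linarith
  · -- e ∈ D \ B : improve B, contradicting minimality of B for c
    obtain ⟨f, hfBD, hbase⟩ := base_exchange_into M hD hB he
    have hfe : f ≠ e := fun h => hfBD.2 (h ▸ he.1)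
    have hceltf : c e < c f := hlt f (Or.inl hfBD) hfe
    have := hBmin _ hbase
    rw [wsum_insert_diff c he.2 hfBD.1] at this
    linarith

/-- If `c` and `c'` are injective weight functions inducing the same strict linear
order on the ground set, then the minimum weight basis is unique and is the same
for `c` and `c'`. -/
theorem unique_min_basis_same_order {α : Type*} [Fintype α] (M : Matroid α)
    (hM : ∃ B, M.IsBase B)
    (c c' : α → ℝ) (hc : Function.Injective c) (hc' : Function.Injective c')
    (horder : ∀ e f : α, c e < c f ↔ c' e < c' f) :
    (∃! B, M.IsBase B ∧ ∀ B', M.IsBase B' → (∑ᶠ x ∈ B, c x) ≤ ∑ᶠ x ∈ B', c x) ∧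
    (∀ B, (M.IsBase B ∧ ∀ B', M.IsBase B' → (∑ᶠ x ∈ B, c x) ≤ ∑ᶠ x ∈ B', c x) ↔
          (M.IsBase B ∧ ∀ B', M.IsBase B' → (∑ᶠ x ∈ B, c' x) ≤ ∑ᶠ x ∈ B', c' x)) := by
  classical
  obtain ⟨B0, hB0⟩ := hM
  have hfin : ({B | M.IsBase B} : Set (Set α)).Finite := Set.toFinite _
  obtain ⟨B, hBbase, hBmin⟩ :=
    Set.exists_min_image {B | M.IsBase B} (fun B => ∑ᶠ x ∈ B, c x) hfin ⟨B0, hB0⟩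
  obtain ⟨D, hDbase, hDmin⟩ :=
    Set.exists_min_image {B | M.IsBase B} (fun B => ∑ᶠ x ∈ B, c' x) hfin ⟨B0, hB0⟩
  have horder' : ∀ e f : α, c' e < c' f ↔ c e < c f := fun e f => (horder e f).symm
  have hBD : B = D := min_basis_eq M c c' hc horder hBbase hDbase hBmin hDmin
  constructor
  · exact ⟨B, ⟨hBbase, hBmin⟩, fun B' ⟨hB', hB'min⟩ =>
      min_basis_eq M c c hc (fun _ _ => Iff.rfl) hB' hBbase hB'min hBmin⟩
  · intro B1
    constructor
    · rintro ⟨h1, h2⟩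
      have : B1 = D := min_basis_eq M c c' hc horder h1 hDbase h2 hDmin
      exact ⟨h1, this ▸ hDmin⟩
    · rintro ⟨h1, h2⟩
      have : B1 = B := min_basis_eq M c' c hc' horder' h1 hBbase h2 hBmin
      exact ⟨h1, this ▸ hBmin⟩
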